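/- Let events E₁, ..., E_N (in a probability space) satisfy P[∪ᵢ Eᵢ] > 0. Then P[∪_{i=1}^N Eᵢ] ≥ (Σᵢ P[Eᵢ])² / (Σ_{i,j} P[Eᵢ ∩ Eⱼ]), where the double sum is over all ordered pairs (i,j) including i = j. -/

import Mathlib

open MeasureTheory
open scoped ENNReal

/-- Chung–Erdős inequality: for events `E₁,...,E_N` with `P[⋃ᵢ Eᵢ] > 0`,
`P[⋃ᵢ Eᵢ] ≥ (Σᵢ P[Eᵢ])² / Σ_{i,j} P[Eᵢ ∩ Eⱼ]` (double sum over all ordered pairs). -/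
theorem stmt_6 {Ω : Type*} [MeasurableSpace Ω] (μ : Measure Ω) [IsProbabilityMeasure μ]
    (N : ℕ) (E : Fin N → Set Ω) (hE : ∀ i, MeasurableSet (E i))
    (hpos : 0 < (μ (⋃ i, E i)).toReal) :
    (∑ i, (μ (E i)).toReal) ^ 2 / (∑ i, ∑ j, (μ (E i ∩ E j)).toReal)
      ≤ (μ (⋃ i, E i)).toReal := by
  classical
  set U : Set Ω := ⋃ i, E i with hU
  have hUm : MeasurableSet U := MeasurableSet.iUnion hE
  set f : Ω → ℝ≥0∞ := fun ω => ∑ i, (E i).indicator 1 ω with hf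
  have hfm : Measurable f := by
    apply Finset.measurable_sum
    intro i _
    exact (measurable_one.indicator (hE i))
  -- ∫ f = Σ μ (E i)
  have hintf : ∫⁻ ω, f ω ∂μ = ∑ i, μ (E i) := by
    rw [hf]
    rw [lintegral_finset_sum _ (fun i _ => measurable_one.indicator (hE i))]
    congr 1
    ext i
    rw [lintegral_indicator_one (hE i)]
  -- ∫ f^2 = Σᵢⱼ μ (Eᵢ ∩ Eⱼ)
  have hsq : ∀ ω, f ω * f ω = ∑ i, ∑ j, (E i ∩ E j).indicator (1 : Ω → ℝ≥0∞) ω := by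
    intro ω
    rw [hf, Finset.sum_mul_sum]
    congr 1; ext i; congr 1; ext j
    by_cases hi : ω ∈ E i <;> by_cases hj : ω ∈ E j <;>
      simp [Set.indicator_apply, hi, hj]
  have hintf2 : ∫⁻ ω, f ω * f ω ∂μ = ∑ i, ∑ j, μ (E i ∩ E j) := by
    simp_rw [hsq]
    rw [lintegral_finset_sum _ (fun i _ => Finset.measurable_sum _
      (fun j _ => measurable_one.indicator ((hE i).inter (hE j))))]
    congr 1; ext i
    rw [lintegral_finset_sum _ (fun j _ => measurable_one.indicator ((hE i).inter (hE j)))]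
    congr 1; ext j
    rw [lintegral_indicator_one ((hE i).inter (hE j))]
  -- f vanishes outside U
  have hsupp : ∀ ω, f ω = f ω * U.indicator 1 ω := by
    intro ω
    by_cases h : ω ∈ U
    · simp [Set.indicator_of_mem h]
    · have : ∀ i, ω ∉ E i := fun i hi => h (Set.mem_iUnion.2 ⟨i, hi⟩)
      simp [hf, Set.indicator_of_notMem, this, Set.indicator_of_notMem h]
  -- Cauchy–Schwarz / Hölder
  have hpq : (2:ℝ).HolderConjugate 2 := Real.holderConjugate_iff.mpr ⟨one_lt_two, by norm_num⟩
  have CS := ENNReal.lintegral_mul_le_Lp_mul_Lq μ hpq hfm.aemeasurable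
    ((measurable_one.indicator hUm).aemeasurable (μ := μ))
  have hg2 : ∀ ω, (U.indicator (1 : Ω → ℝ≥0∞) ω) ^ (2:ℝ) = U.indicator 1 ω := by
    intro ω
    by_cases h : ω ∈ U <;> simp [Set.indicator_apply, h]
  have CS' : ∫⁻ ω, f ω ∂μ ≤ (∫⁻ ω, f ω ^ (2:ℝ) ∂μ) ^ (1/2:ℝ) * (μ U) ^ (1/2:ℝ) := by
    calc ∫⁻ ω, f ω ∂μ = ∫⁻ ω, (f * U.indicator (1 : Ω → ℝ≥0∞)) ω ∂μ := by
          congr 1; ext ω; exact hsupp ω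
      _ ≤ (∫⁻ ω, f ω ^ (2:ℝ) ∂μ) ^ (1/2:ℝ) *
            (∫⁻ ω, (U.indicator (1:Ω → ℝ≥0∞) ω) ^ (2:ℝ) ∂μ) ^ (1/2:ℝ) := CS
      _ = (∫⁻ ω, f ω ^ (2:ℝ) ∂μ) ^ (1/2:ℝ) * (μ U) ^ (1/2:ℝ) := by
          simp_rw [hg2]
          rw [lintegral_indicator_one hUm]
  have hrpow2 : ∀ ω, f ω ^ (2:ℝ) = f ω * f ω := by
    intro ω
    rw [show (2:ℝ) = ((2:ℕ):ℝ) by norm_num, ENNReal.rpow_natCast, sq]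
  -- square both sides
  have key : (∑ i, μ (E i)) ^ 2 ≤ (∑ i, ∑ j, μ (E i ∩ E j)) * μ U := by
    have h1 : (∫⁻ ω, f ω ∂μ) ^ 2
        ≤ ((∫⁻ ω, f ω ^ (2:ℝ) ∂μ) ^ (1/2:ℝ) * (μ U) ^ (1/2:ℝ)) ^ 2 :=
      pow_le_pow_left' CS' 2
    have h2 : ((∫⁻ ω, f ω ^ (2:ℝ) ∂μ) ^ (1/2:ℝ) * (μ U) ^ (1/2:ℝ)) ^ 2
        = (∫⁻ ω, f ω ^ (2:ℝ) ∂μ) * μ U := by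
      rw [mul_pow, ← ENNReal.rpow_natCast ((∫⁻ ω, f ω ^ (2:ℝ) ∂μ) ^ (1/2:ℝ)),
        ← ENNReal.rpow_natCast ((μ U) ^ (1/2:ℝ)), ← ENNReal.rpow_mul, ← ENNReal.rpow_mul]
      norm_num
    rw [h2] at h1
    simp_rw [hrpow2] at h1
    rw [hintf, hintf2] at h1
    exact h1
  -- finiteness
  have hAne : (∑ i, μ (E i)) ≠ ⊤ :=
    (ENNReal.sum_lt_top.2 fun i _ => (measure_lt_top μ _)).ne
  have hBne : (∑ i, ∑ j, μ (E i ∩ E j)) ≠ ⊤ :=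
    (ENNReal.sum_lt_top.2 fun i _ => ENNReal.sum_lt_top.2 fun j _ => measure_lt_top μ _).ne
  have hUne : μ U ≠ ⊤ := (measure_lt_top μ _).ne
  -- to reals
  have keyR : (∑ i, (μ (E i)).toReal) ^ 2
      ≤ (∑ i, ∑ j, (μ (E i ∩ E j)).toReal) * (μ U).toReal := by
    have := ENNReal.toReal_mono (by exact ENNReal.mul_ne_top hBne hUne) key
    rw [ENNReal.toReal_pow, ENNReal.toReal_mul] at this
    rw [ENNReal.toReal_sum (fun i _ => (measure_lt_top μ _).ne)] at this
    rw [ENNReal.toReal_sum (fun i _ => (ENNReal.sum_lt_top.2 fun j _ =>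
      measure_lt_top μ _).ne)] at this
    simp_rw [ENNReal.toReal_sum (fun j _ => (measure_lt_top μ _).ne)] at this
    exact this
  by_cases hB : (∑ i, ∑ j, (μ (E i ∩ E j)).toReal) = 0
  · rw [hB, div_zero]
    exact le_of_lt hpos
  · have hBpos : 0 < ∑ i, ∑ j, (μ (E i ∩ E j)).toReal := by
      refine lt_of_le_of_ne ?_ (Ne.symm hB)
      exact Finset.sum_nonneg fun i _ => Finset.sum_nonneg fun j _ => ENNReal.toReal_nonneg
    rw [div_le_iff₀ hBpos]
    calc (∑ i, (μ (E i)).toReal) ^ 2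
        ≤ (∑ i, ∑ j, (μ (E i ∩ E j)).toReal) * (μ U).toReal := keyR
      _ = (μ U).toReal * (∑ i, ∑ j, (μ (E i ∩ E j)).toReal) := mul_comm _ _
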